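/- Let ξ = (p : E → X) be a numerable principal G-bundle, pointed by ̃* ∈ p⁻¹(*), with G path-connected. Then the homomorphism res : 𝒢 → G, defined by χ( ̃*) = ̃*·res(χ), is surjective: for every g ∈ G there exists a gauge transformation χ ∈ 𝒢 with χ( ̃*) = ̃*·g. -/

import Mathlib

open Set Topology Filter

/-- A topological groupoid over a space `X` ("X-groupoid"): source and target maps,
partially defined continuous composition, continuous units and continuous inversion. -/
structure TopGroupoidOver (X : Type*) (C : Type*) [TopologicalSpace X] [TopologicalSpace C] where
  src : C → X
  tgt : C → X
  comp : (c₁ : C) → (c₂ : C) → src c₁ = tgt c₂ → C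
  unit : X → C
  ginv : C → C
  continuous_src : Continuous src
  continuous_tgt : Continuous tgt
  continuous_comp : Continuous fun q : {q : C × C // src q.1 = tgt q.2} => comp q.1.1 q.1.2 q.2
  continuous_unit : Continuous unit
  continuous_ginv : Continuous ginv
  src_comp : ∀ c₁ c₂ h, src (comp c₁ c₂ h) = src c₂
  tgt_comp : ∀ c₁ c₂ h, tgt (comp c₁ c₂ h) = tgt c₁
  comp_assoc : ∀ c₁ c₂ c₃ (h₁ : src c₁ = tgt c₂) (h₂ : src c₂ = tgt c₃) h₃ h₄,
    comp (comp c₁ c₂ h₁) c₃ h₃ = comp c₁ (comp c₂ c₃ h₂) h₄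
  src_unit : ∀ x, src (unit x) = x
  tgt_unit : ∀ x, tgt (unit x) = x
  comp_unit : ∀ c h, comp c (unit (src c)) h = c
  unit_comp : ∀ c h, comp (unit (tgt c)) c h = c
  src_ginv : ∀ c, src (ginv c) = tgt c
  tgt_ginv : ∀ c, tgt (ginv c) = src c
  comp_ginv : ∀ c h, comp c (ginv c) h = unit (tgt c)
  ginv_comp : ∀ c h, comp (ginv c) c h = unit (src c)

/-- A principal `G`-space over `X`: a continuous map `proj : E → X` with a continuous free
right `G`-action whose orbits are exactly the fibres of `proj` (i.e. `E/G → X` is bijective). -/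
structure PrincipalGSpace (X E G : Type*) [TopologicalSpace X] [TopologicalSpace E]
    [TopologicalSpace G] [Group G] where
  proj : E → X
  smul : E → G → E
  continuous_proj : Continuous proj
  continuous_smul : Continuous fun q : E × G => smul q.1 q.2
  smul_one : ∀ z, smul z 1 = z
  smul_mul : ∀ z g₁ g₂, smul (smul z g₁) g₂ = smul z (g₁ * g₂)
  free : ∀ z g, smul z g = z → g = 1
  proj_smul : ∀ z g, proj (smul z g) = proj z
  proj_surjective : Function.Surjective proj
  exists_smul_eq : ∀ y z, proj y = proj z → ∃ g : G, smul z g = y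

variable {X C E G : Type*} [TopologicalSpace X] [TopologicalSpace C] [TopologicalSpace E]
  [TopologicalSpace G] [Group G]

/-- `ξ` is trivializable over `U ⊆ X`: there is a `G`-equivariant homeomorphism
`proj⁻¹(U) ≃ U × G` over `U`. -/
def PrincipalGSpace.TrivOn (ξ : PrincipalGSpace X E G) (U : Set X) : Prop :=
  ∃ φ : {z : E // ξ.proj z ∈ U} ≃ₜ ↥U × G,
    (∀ z, ((φ z).1 : X) = ξ.proj z.1) ∧
    (∀ z (g : G) (hz : ξ.proj (ξ.smul z.1 g) ∈ U),
      φ ⟨ξ.smul z.1 g, hz⟩ = ((φ z).1, (φ z).2 * g))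

/-- `ξ` is a (locally trivial) principal `G`-bundle. -/
def PrincipalGSpace.IsBundle (ξ : PrincipalGSpace X E G) : Prop :=
  ∀ x : X, ∃ U : Set X, IsOpen U ∧ x ∈ U ∧ ξ.TrivOn U

/-- `ξ` is numerable: some trivializing open cover admits a subordinate partition of unity. -/
def PrincipalGSpace.Numerable (ξ : PrincipalGSpace X E G) : Prop :=
  ∃ (ι : Type) (U : ι → Set X) (pou : PartitionOfUnity ι X univ),
    (∀ i, IsOpen (U i) ∧ ξ.TrivOn (U i)) ∧ (⋃ i, U i) = univ ∧ pou.IsSubordinate U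

/-- A representation of the `X`-groupoid `gpd` on the principal `G`-space `ξ`. -/
structure GroupoidRep (gpd : TopGroupoidOver X C) (ξ : PrincipalGSpace X E G) where
  w : (c : C) → (z : E) → gpd.src c = ξ.proj z → E
  continuous_w : Continuous fun q : {q : C × E // gpd.src q.1 = ξ.proj q.2} => w q.1.1 q.1.2 q.2
  proj_w : ∀ c z h, ξ.proj (w c z h) = gpd.tgt c
  w_comp : ∀ c d z (hcd : gpd.src c = gpd.tgt d) (hdz : gpd.src d = ξ.proj z) h₁ h₂,
    w (gpd.comp c d hcd) z h₁ = w c (w d z hdz) h₂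
  w_ginv : ∀ c z (h : gpd.src c = ξ.proj z) h', w (gpd.ginv c) (w c z h) h' = z
  w_smul : ∀ c z g (h : gpd.src c = ξ.proj z) h', w c (ξ.smul z g) h' = ξ.smul (w c z h) g

/-- A `C`-contraction: a continuous map `ρ : U → C` on an open set `U ⊆ X`
with `α(ρ(x)) = x` and `β(ρ(x)) = x₀`. -/
structure GpdContraction (gpd : TopGroupoidOver X C) (x₀ : X) where
  U : Set X
  isOpen : IsOpen U
  map : U → C
  continuous_map : Continuous map
  src_map : ∀ x : U, gpd.src (map x) = x
  tgt_map : ∀ x : U, gpd.tgt (map x) = x₀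

/-- The groupoid is locally trivial: the domains of the `C`-contractions cover `X`. -/
def TopGroupoidOver.LocTrivial (gpd : TopGroupoidOver X C) (x₀ : X) : Prop :=
  ∀ x : X, ∃ κ : GpdContraction gpd x₀, x ∈ κ.U

/-- A locally trivial numerable groupoid: the cover by domains of the `C`-contractions
admits a subordinate partition of unity. -/
def TopGroupoidOver.LocTrivNumerable (gpd : TopGroupoidOver X C) (x₀ : X) : Prop :=
  gpd.LocTrivial x₀ ∧
  ∃ pou : PartitionOfUnity (GpdContraction gpd x₀) X univ,
    pou.IsSubordinate fun κ => κ.U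

/-- The group `Ω_C = C_*^*` of loops of the groupoid at the basepoint `x₀`. -/
def OmegaGp (gpd : TopGroupoidOver X C) (x₀ : X) :=
  {c : C // gpd.src c = x₀ ∧ gpd.tgt c = x₀}

instance (gpd : TopGroupoidOver X C) (x₀ : X) : TopologicalSpace (OmegaGp gpd x₀) :=
  instTopologicalSpaceSubtype

instance (gpd : TopGroupoidOver X C) (x₀ : X) : Group (OmegaGp gpd x₀) where
  mul a b := ⟨gpd.comp a.1 b.1 (a.2.1.trans b.2.2.symm),
    (gpd.src_comp _ _ _).trans b.2.1, (gpd.tgt_comp _ _ _).trans a.2.2⟩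
  one := ⟨gpd.unit x₀, gpd.src_unit x₀, gpd.tgt_unit x₀⟩
  inv a := ⟨gpd.ginv a.1, (gpd.src_ginv _).trans a.2.2, (gpd.tgt_ginv _).trans a.2.1⟩
  mul_assoc a b c := Subtype.ext (gpd.comp_assoc a.1 b.1 c.1 _ _ _ _)
  one_mul := by
    rintro ⟨c, hs, ht⟩
    apply Subtype.ext
    show gpd.comp (gpd.unit x₀) c _ = c
    subst ht
    exact gpd.unit_comp c _
  mul_one := by
    rintro ⟨c, hs, ht⟩
    apply Subtype.ext
    show gpd.comp c (gpd.unit x₀) _ = c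
    subst hs
    exact gpd.comp_unit c _
  inv_mul_cancel := by
    rintro ⟨c, hs, ht⟩
    apply Subtype.ext
    show gpd.comp (gpd.ginv c) c _ = gpd.unit x₀
    subst hs
    exact gpd.ginv_comp c _

/-- A gauge transformation of `ξ`: a `G`-equivariant self-homeomorphism of `E` over `id_X`. -/
def IsGaugeHomeo (ξ : PrincipalGSpace X E G) (χ : E ≃ₜ E) : Prop :=
  (∀ z, ξ.proj (χ z) = ξ.proj z) ∧ ∀ z g, χ (ξ.smul z g) = ξ.smul (χ z) g

/-- The gauge group of `ξ`. -/
def GaugeGp (ξ : PrincipalGSpace X E G) := {χ : E ≃ₜ E // IsGaugeHomeo ξ χ}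

def GaugeGp.id (ξ : PrincipalGSpace X E G) : GaugeGp ξ :=
  ⟨Homeomorph.refl E, fun _ => rfl, fun _ _ => rfl⟩

/-- Composition of gauge transformations: `(GaugeGp.mul χ ψ) z = χ (ψ z)`. -/
def GaugeGp.mul {ξ : PrincipalGSpace X E G} (χ ψ : GaugeGp ξ) : GaugeGp ξ :=
  ⟨ψ.1.trans χ.1, fun z => (χ.2.1 (ψ.1 z)).trans (ψ.2.1 z), fun z g => by
    simp only [Homeomorph.trans_apply, ψ.2.2 z g, χ.2.2 (ψ.1 z) g]⟩

/-- Inversion of gauge transformations. -/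
def GaugeGp.inv {ξ : PrincipalGSpace X E G} (χ : GaugeGp ξ) : GaugeGp ξ :=
  ⟨χ.1.symm, fun z => by
      conv_rhs => rw [← χ.1.apply_symm_apply z]
      exact (χ.2.1 (χ.1.symm z)).symm,
    fun z g => χ.1.injective (by rw [χ.1.apply_symm_apply, χ.2.2, χ.1.apply_symm_apply])⟩

/-- A symmetric open neighbourhood of the identity of `G`. -/
def SymmNhd {G : Type*} [TopologicalSpace G] [Group G] (V : Set G) : Prop :=
  IsOpen V ∧ (1 : G) ∈ V ∧ ∀ v ∈ V, v⁻¹ ∈ V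

/-- A topological group is SIN if the identity admits a fundamental system of
conjugation-invariant neighbourhoods. -/
def IsSIN (G : Type*) [TopologicalSpace G] [Group G] : Prop :=
  ∀ U ∈ 𝓝 (1 : G), ∃ V ∈ 𝓝 (1 : G), V ⊆ U ∧ ∀ g ∈ V, ∀ h : G, h * g * h⁻¹ ∈ V

/-- The basic entourage `O^𝒢(K,V)` on the gauge group: pairs `(χ, χ̃)` such that
`γ(χ(z), χ̃(z)) ∈ V` for all `z` over `K`, i.e. `χ(z) = χ̃(z)·v` for some `v ∈ V`. -/
def gaugeEnt (ξ : PrincipalGSpace X E G) (K : Set X) (V : Set G) :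
    Set (GaugeGp ξ × GaugeGp ξ) :=
  {p | ∀ z : E, ξ.proj z ∈ K → ∃ v ∈ V, p.1.1 z = ξ.smul (p.2.1 z) v}

/-- The basic entourage `O^R(L,V)` on the set of representations. -/
def repEnt (gpd : TopGroupoidOver X C) (ξ : PrincipalGSpace X E G) (L : Set C) (V : Set G) :
    Set (GroupoidRep gpd ξ × GroupoidRep gpd ξ) :=
  {p | ∀ c ∈ L, ∀ z (h : gpd.src c = ξ.proj z), ∃ v ∈ V, p.1.w c z h = ξ.smul (p.2.w c z h) v}

/-- The basic entourage `{(g̃,g) : g̃ g⁻¹ ∈ V}` of the canonical uniformity of `G`. -/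
def grpEnt (G : Type*) [TopologicalSpace G] [Group G] (V : Set G) : Set (G × G) :=
  {p | p.1 * p.2⁻¹ ∈ V}

/-- The compact-open topology on the gauge group (as subspace of `C(E,E)`). -/
def gaugeCO (ξ : PrincipalGSpace X E G) : TopologicalSpace (GaugeGp ξ) :=
  TopologicalSpace.induced (fun χ : GaugeGp ξ => (⟨χ.1, χ.1.continuous⟩ : C(E, E)))
    inferInstance

/-- The compact-open topology on the set of representations
(as subspace of `C(C ×_X E, E)`). -/
def repCO (gpd : TopGroupoidOver X C) (ξ : PrincipalGSpace X E G) :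
    TopologicalSpace (GroupoidRep gpd ξ) :=
  TopologicalSpace.induced
    (fun w : GroupoidRep gpd ξ =>
      (⟨fun q => w.w q.1.1 q.1.2 q.2, w.continuous_w⟩ :
        C({q : C × E // gpd.src q.1 = ξ.proj q.2}, E))) inferInstance

/-- A space is semilocally contractible if every point has a neighbourhood whose
inclusion is homotopic to a constant map. -/
def SemiLocallyContractible (Z : Type*) [TopologicalSpace Z] : Prop :=
  ∀ z : Z, ∃ U ∈ 𝓝 z, ∃ z' : Z,
    (⟨Subtype.val, continuous_subtype_val⟩ : C(U, Z)).Homotopic (ContinuousMap.const U z')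

/-- A continuous invariant map `q : P → Q` with a continuous right `H`-action on `P`
is a principal `H`-bundle: each point of `Q` has an open neighbourhood `T` with an
`H`-equivariant homeomorphism `q⁻¹(T) ≃ T × H` over `T`. -/
def IsPrincipalHBundle {P Q H : Type*} [TopologicalSpace P] [TopologicalSpace Q]
    [TopologicalSpace H] (q : P → Q) (act : P → H → P) (hmul : H → H → H) : Prop :=
  Continuous q ∧ Continuous (fun s : P × H => act s.1 s.2) ∧
  (∀ p h, q (act p h) = q p) ∧
  ∀ y : Q, ∃ T : Set Q, IsOpen T ∧ y ∈ T ∧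
    ∃ φ : {p : P // q p ∈ T} ≃ₜ ↥T × H,
      (∀ p, ((φ p).1 : Q) = q p.1) ∧
      ∀ p (h : H) (hm : q (act p.1 h) ∈ T), φ ⟨act p.1 h, hm⟩ = ((φ p).1, hmul (φ p).2 h)

/-- **Proposition (numer), second part**. For a numerable principal `G`-bundle with `G`
path-connected, the restriction homomorphism `res : 𝒢 → G` is surjective: for every `g ∈ G`
there is a gauge transformation `χ` with `χ( ̃*) = ̃*·g`. -/
theorem statement5 {X E G : Type*} [TopologicalSpace X] [TopologicalSpace E]
    [TopologicalSpace G] [Group G] [IsTopologicalGroup G]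
    (ξ : PrincipalGSpace X E G) (hbdl : ξ.IsBundle) (hnum : ξ.Numerable)
    (hconn : PathConnectedSpace G) (x₀ : X) (e₀ : E) (he₀ : ξ.proj e₀ = x₀) :
    ∀ g : G, ∃ χ : GaugeGp ξ, χ.1 e₀ = ξ.smul e₀ g := by
  classical
  intro g
  obtain ⟨ι, U, pou, hUtriv, -, hsub⟩ := hnum
  -- find an index with positive value at x₀
  have hsum := pou.sum_eq_one (Set.mem_univ x₀)
  have hex : ∃ i, pou i x₀ ≠ 0 := by
    by_contra h
    push_neg at h
    rw [finsum_eq_zero_of_forall_eq_zero h] at hsum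
    exact one_ne_zero hsum.symm
  obtain ⟨i₀, hi₀⟩ := hex
  have ha : (0 : ℝ) < pou i₀ x₀ := lt_of_le_of_ne (pou.nonneg i₀ x₀) (Ne.symm hi₀)
  have hx₀U : x₀ ∈ U i₀ := hsub i₀ (subset_tsupport _ (by simpa using hi₀))
  obtain ⟨φ, hφ1, hφ2⟩ := (hUtriv i₀).2
  have hUopen : IsOpen (U i₀) := (hUtriv i₀).1
  set σ : {z : E // ξ.proj z ∈ U i₀} → G := fun w => (φ w).2 with hσ
  have hσcont : Continuous σ := continuous_snd.comp φ.continuous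
  have hσsmul : ∀ (w : {z : E // ξ.proj z ∈ U i₀}) (h : G)
      (hm : ξ.proj (ξ.smul w.1 h) ∈ U i₀), σ ⟨ξ.smul w.1 h, hm⟩ = σ w * h := by
    intro w h hm
    simp only [hσ, hφ2 w h hm]
  have he₀U : ξ.proj e₀ ∈ U i₀ := by rw [he₀]; exact hx₀U
  set s : G := σ ⟨e₀, he₀U⟩ with hs
  haveI := hconn
  set γ : Path (1 : G) (s * g * s⁻¹) := PathConnectedSpace.somePath 1 (s * g * s⁻¹) with hγ
  set f : X → ℝ := fun x => pou i₀ x / pou i₀ x₀ with hf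
  have hfcont : Continuous f := ((pou i₀).continuous).div_const _
  set τ : E → G := fun z =>
    if h : ξ.proj z ∈ U i₀ then (σ ⟨z, h⟩)⁻¹ * γ.extend (f (ξ.proj z)) * σ ⟨z, h⟩ else 1
    with hτ
  -- τ is 1 outside the support
  have hτ1 : ∀ z, ξ.proj z ∉ tsupport (pou i₀) → τ z = 1 := by
    intro z hz
    by_cases h : ξ.proj z ∈ U i₀
    · have hp0 : pou i₀ (ξ.proj z) = 0 := by
        by_contra hne
        exact hz (subset_tsupport _ (by simpa using hne))
      have hf0 : f (ξ.proj z) = 0 := by simp [hf, hp0]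
      simp [hτ, h, hf0, Path.extend_zero]
    · simp [hτ, h]
  -- equivariance of τ
  have hτsmul : ∀ z h, τ (ξ.smul z h) = h⁻¹ * τ z * h := by
    intro z h
    have hproj : ξ.proj (ξ.smul z h) = ξ.proj z := ξ.proj_smul z h
    by_cases hz : ξ.proj z ∈ U i₀
    · have hz' : ξ.proj (ξ.smul z h) ∈ U i₀ := hproj ▸ hz
      have := hσsmul ⟨z, hz⟩ h hz'
      simp only [hτ, dif_pos hz, dif_pos hz', hproj, this]
      group
    · have hz' : ξ.proj (ξ.smul z h) ∉ U i₀ := hproj ▸ hz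
      simp [hτ, hz, hz']
  -- continuity of τ
  have hF : Continuous (fun w : {z : E // ξ.proj z ∈ U i₀} =>
      (σ w)⁻¹ * γ.extend (f (ξ.proj w.1)) * σ w) := by
    exact ((hσcont.inv.mul (γ.continuous_extend.comp
      (hfcont.comp (ξ.continuous_proj.comp continuous_subtype_val)))).mul hσcont)
  have hτcont : Continuous τ := by
    rw [continuous_iff_continuousAt]
    intro z
    by_cases hz : ξ.proj z ∈ U i₀
    · have hO : IsOpen (ξ.proj ⁻¹' (U i₀)) := hUopen.preimage ξ.continuous_proj
      refine ContinuousOn.continuousAt ?_ (hO.mem_nhds hz)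
      rw [continuousOn_iff_continuous_restrict]
      have : Set.domRestrict (ξ.proj ⁻¹' (U i₀)) τ = fun w =>
          (σ ⟨w.1, w.2⟩)⁻¹ * γ.extend (f (ξ.proj w.1)) * σ ⟨w.1, w.2⟩ := by
        funext w
        exact dif_pos w.2
      rw [this]
      exact hF.comp (by fun_prop)
    · have hO : IsOpen (ξ.proj ⁻¹' (tsupport (pou i₀))ᶜ) :=
        (isClosed_tsupport _).isOpen_compl.preimage ξ.continuous_proj
      have hzO : z ∈ ξ.proj ⁻¹' (tsupport (pou i₀))ᶜ := fun hmem => hz (hsub i₀ hmem)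
      refine ContinuousOn.continuousAt ?_ (hO.mem_nhds hzO)
      exact (continuousOn_const (c := (1 : G))).congr fun w hw => hτ1 w hw
  -- value of τ at e₀
  have hτe₀ : τ e₀ = g := by
    have hf1 : f (ξ.proj e₀) = 1 := by
      simp [hf, he₀, div_self (ne_of_gt ha)]
    simp only [hτ, dif_pos he₀U, hf1, Path.extend_one, ← hs]
    group
  -- the gauge transformation
  have hcontχ : Continuous fun z => ξ.smul z (τ z) :=
    ξ.continuous_smul.comp (continuous_id.prodMk hτcont)
  have hcontχ' : Continuous fun z => ξ.smul z (τ z)⁻¹ :=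
    ξ.continuous_smul.comp (continuous_id.prodMk hτcont.inv)
  have hleft : ∀ z : E, ξ.smul (ξ.smul z (τ z)) (τ (ξ.smul z (τ z)))⁻¹ = z := by
    intro z
    rw [hτsmul, ξ.smul_mul]
    have : τ z * ((τ z)⁻¹ * τ z * τ z)⁻¹ = 1 := by group
    rw [this, ξ.smul_one]
  have hright : ∀ z : E, ξ.smul (ξ.smul z (τ z)⁻¹) (τ (ξ.smul z (τ z)⁻¹)) = z := by
    intro z
    rw [hτsmul, ξ.smul_mul]
    have : (τ z)⁻¹ * ((τ z)⁻¹⁻¹ * τ z * (τ z)⁻¹) = 1 := by group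
    rw [this, ξ.smul_one]
  refine ⟨⟨⟨⟨fun z => ξ.smul z (τ z), fun z => ξ.smul z (τ z)⁻¹, hleft, hright⟩,
    hcontχ, hcontχ'⟩, ?_, ?_⟩, ?_⟩
  · intro z
    exact ξ.proj_smul z (τ z)
  · intro z h
    show ξ.smul (ξ.smul z h) (τ (ξ.smul z h)) = ξ.smul (ξ.smul z (τ z)) h
    rw [hτsmul, ξ.smul_mul, ξ.smul_mul]
    congr 1
    group
  · show ξ.smul e₀ (τ e₀) = ξ.smul e₀ g
    rw [hτe₀]
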